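/- If a triple (t, r, q) of nonzero polynomials in ℚ[x] parameterizes a complete family of pairing-friendly elliptic curves with embedding degree k = 6 and CM discriminant D = 3, then ρ(t, r, q) ≥ 2, i.e., deg q ≥ 2·deg r. -/

import Mathlib

open Polynomial

/-- `f ∈ ℚ[x]` represents integers: there is an integer `a` with `f(a) ∈ ℤ`. -/
def RepresentsIntegers (f : ℚ[X]) : Prop :=
  ∃ a n : ℤ, f.eval (a : ℚ) = (n : ℚ)

/-- `f ∈ ℚ[x]` represents primes: `f` is nonconstant, irreducible over `ℚ`,
has positive leading coefficient, represents integers, and no prime number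
divides every integer value `f(a)` with `a ∈ ℤ`, `f(a) ∈ ℤ`. -/
def RepresentsPrimes (f : ℚ[X]) : Prop :=
  0 < f.natDegree ∧ Irreducible f ∧ 0 < f.leadingCoeff ∧ RepresentsIntegers f ∧
    ∀ p : ℕ, p.Prime → ∃ a n : ℤ, f.eval (a : ℚ) = (n : ℚ) ∧ ¬ (p : ℤ) ∣ n

/-- `(t, r, q)` parameterizes a complete family of pairing-friendly elliptic curves
with embedding degree `k` and CM discriminant `D`:
(i) `r` represents primes; (ii) `q` represents primes; (iii) `r ∣ q + 1 - t`;
(iv) `r ∣ Φ_k(t - 1)`; (v) `D·y² = 4q - t²` for some `y ∈ ℚ[x]`. -/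
def IsCompleteFamily (k D : ℕ) (t r q : ℚ[X]) : Prop :=
  t ≠ 0 ∧ r ≠ 0 ∧ q ≠ 0 ∧
  RepresentsPrimes r ∧ RepresentsPrimes q ∧
  r ∣ (q + 1 - t) ∧
  r ∣ (cyclotomic k ℚ).comp (t - 1) ∧
  ∃ y : ℚ[X], (D : ℚ[X]) * y ^ 2 = 4 * q - t ^ 2


lemma cyclotomic_six : cyclotomic 6 ℚ = X ^ 2 - X + 1 := by
  have h := prod_cyclotomic_eq_X_pow_sub_one (by norm_num : 0 < 6) ℚ
  have hdiv : Nat.divisors 6 = {1, 2, 3, 6} := by decide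
  rw [hdiv, Finset.prod_insert (by decide), Finset.prod_insert (by decide),
    Finset.prod_insert (by decide), Finset.prod_singleton,
    cyclotomic_one, cyclotomic_two, cyclotomic_three] at h
  have hP : ((X - 1) * ((X + 1) * ((X ^ 2 + X + 1))) : ℚ[X]) ≠ 0 := by
    intro hc
    have := congrArg (fun p => Polynomial.eval 2 p) hc
    norm_num at this
  have h2 : ((X-1) * ((X+1) * ((X^2+X+1))) : ℚ[X]) * cyclotomic 6 ℚ
       = ((X-1) * ((X+1) * ((X^2+X+1))) : ℚ[X]) * (X ^ 2 - X + 1) := by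
    rw [show ((X-1) * ((X+1) * ((X^2+X+1))) : ℚ[X]) * cyclotomic 6 ℚ
       = (X - 1) * ((X + 1) * ((X ^ 2 + X + 1) * cyclotomic 6 ℚ)) by ring, h]
    ring
  exact mul_left_cancel₀ hP h2

lemma main_deg (q t r s u : ℚ[X]) (hq0 : q ≠ 0) (ht0 : t ≠ 0) (hr0 : r ≠ 0)
    (hqirr : Irreducible q) (htdeg : 0 < t.natDegree)
    (h12 : 12 * q = 3 * t ^ 2 + u ^ 2)
    (hu : u = t + r * s ∨ u = t - r * s) :
    2 * r.natDegree ≤ q.natDegree := by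
  have hdq : (12 * q).natDegree = q.natDegree := by
    rw [natDegree_mul (by norm_num) hq0]; simp
  by_cases hs : s = 0
  · -- then u = t and 12 q = 4 t², contradicting irreducibility of q
    subst hs
    have hut : u = t := by rcases hu with h | h <;> simp [h]
    rw [hut] at h12
    exfalso
    have h3 : (3 : ℚ[X]) * q = t * t := by
      have h4 : (4 : ℚ[X]) * ((3:ℚ[X]) * q) = 4 * (t * t) := by
        rw [show (4:ℚ[X]) * ((3:ℚ[X]) * q) = 12 * q by ring, h12]; ring
      exact mul_left_cancel₀ (by norm_num) h4
    have hq' : q = (C (3:ℚ)⁻¹ * t) * t := by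
      have : (3 : ℚ[X]) * q = (3:ℚ[X]) * ((C (3:ℚ)⁻¹ * t) * t) := by
        rw [h3]
        have h31 : (3 : ℚ[X]) * C (3:ℚ)⁻¹ = 1 := by
          rw [(map_ofNat C 3).symm, ← C_mul]; norm_num
        calc t * t = ((3:ℚ[X]) * C (3:ℚ)⁻¹) * (t * t) := by rw [h31]; ring
          _ = (3:ℚ[X]) * (C (3:ℚ)⁻¹ * t * t) := by ring
      exact mul_left_cancel₀ (by norm_num) this
    rcases hqirr.isUnit_or_isUnit hq' with hU | hU
    · have := natDegree_eq_zero_of_isUnit hU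
      rw [natDegree_C_mul (by norm_num)] at this
      omega
    · have := natDegree_eq_zero_of_isUnit hU
      omega
  · have hrs0 : r * s ≠ 0 := mul_ne_zero hr0 hs
    have hrs : (r * s).natDegree = r.natDegree + s.natDegree := natDegree_mul hr0 hs
    by_cases hle : (r * s).natDegree ≤ t.natDegree
    · -- degree of q is 2 * deg t and deg r ≤ deg t
      have hR : r.natDegree ≤ t.natDegree := by omega
      have hu_le : u.natDegree ≤ t.natDegree := by
        rcases hu with h | h <;> subst h
        · exact le_trans (natDegree_add_le _ _) (by simp [hle])
        · exact le_trans (natDegree_sub_le _ _) (by simp [hle])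
      have hc2 : (3 * t ^ 2 + u ^ 2).coeff (t.natDegree + t.natDegree)
          = 3 * t.leadingCoeff ^ 2 + (u.coeff t.natDegree) ^ 2 := by
        rw [coeff_add, pow_two, pow_two, show (3 : ℚ[X]) * (t*t) = C 3 * (t*t) by rw [(map_ofNat C 3).symm],
          coeff_C_mul, coeff_mul_degree_add_degree,
          coeff_mul_add_eq_of_natDegree_le hu_le hu_le]
        ring
      have hlc : t.leadingCoeff ≠ 0 := leadingCoeff_ne_zero.mpr ht0
      have hne : (3 * t ^ 2 + u ^ 2).coeff (t.natDegree + t.natDegree) ≠ 0 := by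
        rw [hc2]; positivity
      have hub : (3 * t ^ 2 + u ^ 2).natDegree ≤ t.natDegree + t.natDegree := by
        refine le_trans (natDegree_add_le _ _) (max_le ?_ ?_)
        · refine le_trans (natDegree_mul_le) ?_
          simp [natDegree_pow]; omega
        · rw [natDegree_pow]; omega
      have hdeg_eq : (3 * t ^ 2 + u ^ 2).natDegree = t.natDegree + t.natDegree :=
        le_antisymm hub (le_natDegree_of_ne_zero hne)
      have : q.natDegree = t.natDegree + t.natDegree := by rw [← hdq, h12, hdeg_eq]
      omega
    · push_neg at hle
      have hu_eq : u.natDegree = (r * s).natDegree := by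
        rcases hu with h | h <;> subst h
        · exact natDegree_add_eq_right_of_natDegree_lt hle
        · rw [sub_eq_add_neg, natDegree_add_eq_right_of_natDegree_lt (by rwa [natDegree_neg]),
            natDegree_neg]
      have h3t : (3 * t ^ 2).natDegree < (u ^ 2).natDegree := by
        rw [natDegree_pow, hu_eq]
        refine lt_of_le_of_lt (natDegree_mul_le) ?_
        simp [natDegree_pow]; omega
      have hdeg_eq : (3 * t ^ 2 + u ^ 2).natDegree = 2 * (r * s).natDegree := by
        rw [natDegree_add_eq_right_of_natDegree_lt h3t, natDegree_pow, hu_eq]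
      have : q.natDegree = 2 * (r * s).natDegree := by rw [← hdq, h12, hdeg_eq]
      omega

/-- A complete family with embedding degree 6 and CM discriminant 3 has `ρ ≥ 2`. -/
theorem rho_ge_two_k6_D3 (t r q : ℚ[X]) (h : IsCompleteFamily 6 3 t r q) :
    2 * r.natDegree ≤ q.natDegree := by
  obtain ⟨ht0, hr0, hq0, hr, hq, hdvd1, hdvd2, y, hy⟩ := h
  have hy' : (3:ℚ[X]) * y ^ 2 = 4 * q - t ^ 2 := by
    rw [← hy]; norm_num
  have hcyc : (cyclotomic 6 ℚ).comp (t - 1) = t ^ 2 - 3 * t + 3 := by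
    rw [_root_.cyclotomic_six]
    simp only [sub_comp, add_comp, pow_comp, X_comp, one_comp]
    ring
  rw [hcyc] at hdvd2
  have hrdeg : 0 < r.natDegree := hr.1
  have htdeg : 0 < t.natDegree := by
    by_contra hA
    push_neg at hA
    have ht : t = C (t.coeff 0) := eq_C_of_natDegree_le_zero (by omega)
    set c := t.coeff 0 with hc
    have hval : t ^ 2 - 3 * t + 3 = C (c ^ 2 - 3 * c + 3) := by
      rw [ht]
      simp only [map_add, map_sub, map_mul, map_pow, map_ofNat]
    have hCne : C (c ^ 2 - 3 * c + 3) ≠ 0 := by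
      rw [Ne, C_eq_zero]
      nlinarith [sq_nonneg (c - 3/2)]
    have hle := natDegree_le_of_dvd (hval ▸ hdvd2) hCne
    rw [natDegree_C] at hle
    omega
  have hpr : Prime r := hr.2.1.prime
  have hfac : r ∣ (3 * y - t) * (3 * y + t) := by
    have key : (3 * y - t) * (3 * y + t)
        = 12 * (q + 1 - t) - 4 * (t ^ 2 - 3 * t + 3)
          + 3 * ((3:ℚ[X]) * y ^ 2 - (4 * q - t ^ 2)) := by ring
    rw [key, hy', sub_self, mul_zero, add_zero]
    exact dvd_sub (hdvd1.mul_left 12) (hdvd2.mul_left 4)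
  have haux : (3:ℚ[X]) * ((3:ℚ[X]) * y ^ 2) = 3 * (4 * q - t ^ 2) := by rw [hy']
  rcases hpr.2.2 _ _ hfac with hd | hd
  · obtain ⟨s, hsx⟩ := hd
    refine main_deg q t r s (t + r * s) hq0 ht0 hr0 hq.2.1 htdeg ?_ (Or.inl rfl)
    have h3y : t + r * s = 3 * y := by rw [← hsx]; ring
    rw [h3y]
    calc 12 * q = 3 * t ^ 2 + 3 * (4 * q - t ^ 2) := by ring
      _ = 3 * t ^ 2 + 3 * (3 * y ^ 2) := by rw [haux]
      _ = 3 * t ^ 2 + (3 * y) ^ 2 := by ring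
  · obtain ⟨s, hsx⟩ := hd
    refine main_deg q t r s (t - r * s) hq0 ht0 hr0 hq.2.1 htdeg ?_ (Or.inr rfl)
    have h3y : t - r * s = -(3 * y) := by rw [← hsx]; ring
    rw [h3y]
    calc 12 * q = 3 * t ^ 2 + 3 * (4 * q - t ^ 2) := by ring
      _ = 3 * t ^ 2 + 3 * (3 * y ^ 2) := by rw [haux]
      _ = 3 * t ^ 2 + (-(3 * y)) ^ 2 := by ring
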